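/- Let G be a uniquely C4+-saturated graph. Then G contains no subgraph isomorphic to the bowknot graph (two triangles sharing exactly one vertex), no subgraph isomorphic to the house graph (a 5-cycle with one chord), and no subgraph isomorphic to K_{2,3}. -/

import Mathlib

open SimpleGraph

/-- The diamond graph `C₄⁺`: a `4`-cycle with one chord, i.e. `K₄` minus an edge. -/
def diamond : SimpleGraph (Fin 4) := (⊤ : SimpleGraph (Fin 4)).deleteEdges {s(0, 1)}

/-- `G'` is a copy of `H` in `G`, i.e. a subgraph of `G` isomorphic to `H`. -/
def IsCopy {W V : Type*} (H : SimpleGraph W) {G : SimpleGraph V} (G' : G.Subgraph) : Prop :=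
  Nonempty (G'.coe ≃g H)

/-- `G` is uniquely `H`-saturated: `G` is `H`-free, and adding any non-edge
creates exactly one copy of `H`. -/
def UniquelySaturated {W V : Type*} (H : SimpleGraph W) (G : SimpleGraph V) : Prop :=
  (∀ G' : G.Subgraph, ¬ IsCopy H G') ∧
    ∀ u v : V, u ≠ v → ¬ G.Adj u v →
      ∃! G' : (G ⊔ SimpleGraph.fromEdgeSet {s(u, v)}).Subgraph, IsCopy H G'

/-- The bowknot graph: two triangles sharing exactly one vertex. -/
def bowknot : SimpleGraph (Fin 5) :=
  SimpleGraph.fromEdgeSet {s(0, 1), s(0, 2), s(1, 2), s(2, 3), s(2, 4), s(3, 4)}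

/-- The house graph: a `5`-cycle with one chord. -/
def house : SimpleGraph (Fin 5) :=
  SimpleGraph.fromEdgeSet {s(0, 1), s(1, 2), s(2, 3), s(3, 4), s(4, 0), s(1, 4)}

section Aux

variable {W V : Type*} {H : SimpleGraph W} {G : SimpleGraph V}

/-- From an injective map preserving adjacency, build a subgraph copy. -/
lemma isCopy_of_map (f : W → V) (hinj : Function.Injective f)
    (hf : ∀ i j, H.Adj i j → G.Adj (f i) (f j)) :
    ∃ G' : G.Subgraph, IsCopy H G' ∧ G'.verts = Set.range f := by
  refine ⟨⟨Set.range f, fun x y => ∃ i j, H.Adj i j ∧ f i = x ∧ f j = y, ?_, ?_, ?_⟩, ?_, rfl⟩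
  · rintro x y ⟨i, j, h, rfl, rfl⟩
    exact hf i j h
  · rintro x y ⟨i, j, h, rfl, rfl⟩
    exact ⟨i, rfl⟩
  · constructor
    rintro x y ⟨i, j, h, rfl, rfl⟩
    exact ⟨j, i, h.symm, rfl, rfl⟩
  · refine ⟨Iso.symm ⟨Equiv.ofInjective f hinj, ?_⟩⟩
    intro a b
    constructor
    · rintro ⟨i, j, h, hi, hj⟩
      rwa [hinj hi, hinj hj] at h
    · intro h
      exact ⟨a, b, h, rfl, rfl⟩

/-- From a subgraph copy, extract an injective adjacency-preserving map. -/
lemma map_of_isCopy {G' : G.Subgraph} (h : IsCopy H G') :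
    ∃ f : W → V, Function.Injective f ∧ ∀ i j, H.Adj i j → G.Adj (f i) (f j) := by
  obtain ⟨e⟩ := h
  refine ⟨fun i => (e.symm i : V), ?_, ?_⟩
  · intro i j hij
    exact e.symm.injective (Subtype.coe_injective hij)
  · intro i j hij
    have : G'.coe.Adj (e.symm i) (e.symm j) := e.symm.map_rel_iff.mpr hij
    exact G'.adj_sub this

/-- Build a diamond copy from four distinct vertices where all pairs but `a,b` are adjacent. -/
lemma exists_diamond_copy (a b c d : V)
    (hab : a ≠ b) (hac : a ≠ c) (had : a ≠ d) (hbc : b ≠ c) (hbd : b ≠ d) (hcd : c ≠ d)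
    (h1 : G.Adj a c) (h2 : G.Adj a d) (h3 : G.Adj b c) (h4 : G.Adj b d) (h5 : G.Adj c d) :
    ∃ G' : G.Subgraph, IsCopy diamond G' ∧ G'.verts = {a, b, c, d} := by
  have hinj : Function.Injective ![a, b, c, d] := by
    intro i j hij
    fin_cases i <;> fin_cases j <;> simp_all
  have hadj : ∀ i j, diamond.Adj i j → G.Adj (![a, b, c, d] i) (![a, b, c, d] j) := by
    intro i j hij
    fin_cases i <;> fin_cases j <;> simp_all [diamond] <;>
      first
        | exact h1 | exact h2 | exact h3 | exact h4 | exact h5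
        | exact h1.symm | exact h2.symm | exact h3.symm | exact h4.symm | exact h5.symm
  obtain ⟨G', hc, hv⟩ := isCopy_of_map ![a, b, c, d] hinj hadj
  refine ⟨G', hc, ?_⟩
  rw [hv]
  ext x
  simp [Fin.exists_fin_succ, Set.range, Fin.exists_fin_two, or_assoc, eq_comm]

/-- Two distinct diamond copies after adding a non-edge contradict unique saturation. -/
lemma not_two_copies (hsat : UniquelySaturated diamond G) {u v : V} (hne : u ≠ v)
    (hnadj : ¬ G.Adj u v)
    {G1 G2 : (G ⊔ SimpleGraph.fromEdgeSet {s(u, v)}).Subgraph}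
    (h1 : IsCopy diamond G1) (h2 : IsCopy diamond G2) (h12 : G1 ≠ G2) : False := by
  obtain ⟨W, -, huniq⟩ := hsat.2 u v hne hnadj
  exact h12 ((huniq G1 h1).trans (huniq G2 h2).symm)

end Aux

theorem stmt2 {V : Type*} (G : SimpleGraph V) (hsat : UniquelySaturated diamond G) :
    (∀ G' : G.Subgraph, ¬ IsCopy bowknot G') ∧
      (∀ G' : G.Subgraph, ¬ IsCopy house G') ∧
      (∀ G' : G.Subgraph, ¬ IsCopy (completeBipartiteGraph (Fin 2) (Fin 3)) G') := by
  have hfree : ∀ G' : G.Subgraph, ¬ IsCopy diamond G' := hsat.1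
  refine ⟨?_, ?_, ?_⟩
  · -- bowknot
    intro G' hcopy
    obtain ⟨f, hinj, hf⟩ := map_of_isCopy hcopy
    have a01 : G.Adj (f 0) (f 1) := hf 0 1 (by simp [bowknot])
    have a02 : G.Adj (f 0) (f 2) := hf 0 2 (by simp [bowknot])
    have a12 : G.Adj (f 1) (f 2) := hf 1 2 (by simp [bowknot])
    have a23 : G.Adj (f 2) (f 3) := hf 2 3 (by simp [bowknot])
    have a24 : G.Adj (f 2) (f 4) := hf 2 4 (by simp [bowknot])
    have a34 : G.Adj (f 3) (f 4) := hf 3 4 (by simp [bowknot])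
    have ne : ∀ i j : Fin 5, i ≠ j → f i ≠ f j := fun i j h => hinj.ne h
    -- f 0 and f 3 are not adjacent in G
    have hnadj : ¬ G.Adj (f 0) (f 3) := by
      intro hadj
      obtain ⟨D, hD, -⟩ := exists_diamond_copy (f 1) (f 3) (f 0) (f 2)
        (ne 1 3 (by decide)) (ne 1 0 (by decide)) (ne 1 2 (by decide))
        (ne 3 0 (by decide)) (ne 3 2 (by decide)) (ne 0 2 (by decide))
        a01.symm a12 hadj.symm a23.symm a02
      exact hfree D hD
    set G2 := G ⊔ SimpleGraph.fromEdgeSet {s(f 0, f 3)} with hG2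
    have hle : ∀ x y, G.Adj x y → G2.Adj x y := fun x y h => Or.inl h
    have hnew : G2.Adj (f 0) (f 3) := Or.inr (by simp [ne 0 3 (by decide)])
    obtain ⟨D1, hD1, hv1⟩ := exists_diamond_copy (G := G2) (f 1) (f 3) (f 0) (f 2)
      (ne 1 3 (by decide)) (ne 1 0 (by decide)) (ne 1 2 (by decide))
      (ne 3 0 (by decide)) (ne 3 2 (by decide)) (ne 0 2 (by decide))
      (hle _ _ a01.symm) (hle _ _ a12) hnew.symm (hle _ _ a23.symm) (hle _ _ a02)
    obtain ⟨D2, hD2, hv2⟩ := exists_diamond_copy (G := G2) (f 0) (f 4) (f 2) (f 3)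
      (ne 0 4 (by decide)) (ne 0 2 (by decide)) (ne 0 3 (by decide))
      (ne 4 2 (by decide)) (ne 4 3 (by decide)) (ne 2 3 (by decide))
      (hle _ _ a02) hnew (hle _ _ a24.symm) (hle _ _ a34.symm) (hle _ _ a23)
    refine not_two_copies hsat (ne 0 3 (by decide)) hnadj hD1 hD2 ?_
    intro h
    have hmem : f 1 ∈ D2.verts := by
      rw [← h, hv1]; left; rfl
    rw [hv2] at hmem
    rcases hmem with h' | h' | h' | h'
    · exact ne 1 0 (by decide) h'
    · exact ne 1 4 (by decide) h'
    · exact ne 1 2 (by decide) h'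
    · exact ne 1 3 (by decide) h'
  · -- house
    intro G' hcopy
    obtain ⟨f, hinj, hf⟩ := map_of_isCopy hcopy
    have a01 : G.Adj (f 0) (f 1) := hf 0 1 (by simp [house])
    have a12 : G.Adj (f 1) (f 2) := hf 1 2 (by simp [house])
    have a23 : G.Adj (f 2) (f 3) := hf 2 3 (by simp [house])
    have a34 : G.Adj (f 3) (f 4) := hf 3 4 (by simp [house])
    have a40 : G.Adj (f 4) (f 0) := hf 4 0 (by simp [house])
    have a14 : G.Adj (f 1) (f 4) := hf 1 4 (by simp [house])
    have ne : ∀ i j : Fin 5, i ≠ j → f i ≠ f j := fun i j h => hinj.ne h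
    -- f 1 and f 3 are not adjacent in G
    have hnadj : ¬ G.Adj (f 1) (f 3) := by
      intro hadj
      obtain ⟨D, hD, -⟩ := exists_diamond_copy (f 2) (f 4) (f 1) (f 3)
        (ne 2 4 (by decide)) (ne 2 1 (by decide)) (ne 2 3 (by decide))
        (ne 4 1 (by decide)) (ne 4 3 (by decide)) (ne 1 3 (by decide))
        a12.symm a23 a14.symm a34.symm hadj
      exact hfree D hD
    set G2 := G ⊔ SimpleGraph.fromEdgeSet {s(f 1, f 3)} with hG2
    have hle : ∀ x y, G.Adj x y → G2.Adj x y := fun x y h => Or.inl h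
    have hnew : G2.Adj (f 1) (f 3) := Or.inr (by simp [ne 1 3 (by decide)])
    obtain ⟨D1, hD1, hv1⟩ := exists_diamond_copy (G := G2) (f 2) (f 4) (f 1) (f 3)
      (ne 2 4 (by decide)) (ne 2 1 (by decide)) (ne 2 3 (by decide))
      (ne 4 1 (by decide)) (ne 4 3 (by decide)) (ne 1 3 (by decide))
      (hle _ _ a12.symm) (hle _ _ a23) (hle _ _ a14.symm) (hle _ _ a34.symm) hnew
    obtain ⟨D2, hD2, hv2⟩ := exists_diamond_copy (G := G2) (f 0) (f 3) (f 1) (f 4)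
      (ne 0 3 (by decide)) (ne 0 1 (by decide)) (ne 0 4 (by decide))
      (ne 3 1 (by decide)) (ne 3 4 (by decide)) (ne 1 4 (by decide))
      (hle _ _ a01) (hle _ _ a40.symm) hnew.symm (hle _ _ a34) (hle _ _ a14)
    refine not_two_copies hsat (ne 1 3 (by decide)) hnadj hD1 hD2 ?_
    intro h
    have hmem : f 2 ∈ D2.verts := by
      rw [← h, hv1]; left; rfl
    rw [hv2] at hmem
    rcases hmem with h' | h' | h' | h'
    · exact ne 2 0 (by decide) h'
    · exact ne 2 3 (by decide) h'
    · exact ne 2 1 (by decide) h'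
    · exact ne 2 4 (by decide) h'
  · -- K_{2,3}
    intro G' hcopy
    obtain ⟨f, hinj, hf⟩ := map_of_isCopy hcopy
    set a0 := f (Sum.inl 0) with ha0
    set a1 := f (Sum.inl 1) with ha1
    set b0 := f (Sum.inr 0) with hb0
    set b1 := f (Sum.inr 1) with hb1
    set b2 := f (Sum.inr 2) with hb2
    have adj : ∀ (i : Fin 2) (j : Fin 3), G.Adj (f (Sum.inl i)) (f (Sum.inr j)) := by
      intro i j
      exact hf _ _ (by simp [completeBipartiteGraph])
    have ne : ∀ i j : Fin 2 ⊕ Fin 3, i ≠ j → f i ≠ f j := fun i j h => hinj.ne h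
    have hnadj : ¬ G.Adj a0 a1 := by
      intro hadj
      obtain ⟨D, hD, -⟩ := exists_diamond_copy b0 b1 a0 a1
        (ne (Sum.inr 0) (Sum.inr 1) (by decide)) (ne (Sum.inr 0) (Sum.inl 0) (by decide))
        (ne (Sum.inr 0) (Sum.inl 1) (by decide)) (ne (Sum.inr 1) (Sum.inl 0) (by decide))
        (ne (Sum.inr 1) (Sum.inl 1) (by decide)) (ne (Sum.inl 0) (Sum.inl 1) (by decide))
        (adj 0 0).symm (adj 1 0).symm (adj 0 1).symm (adj 1 1).symm hadj
      exact hfree D hD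
    set G2 := G ⊔ SimpleGraph.fromEdgeSet {s(a0, a1)} with hG2
    have hle : ∀ x y, G.Adj x y → G2.Adj x y := fun x y h => Or.inl h
    have hnew : G2.Adj a0 a1 :=
      Or.inr (by simp; exact ne (Sum.inl 0) (Sum.inl 1) (by decide))
    obtain ⟨D1, hD1, hv1⟩ := exists_diamond_copy (G := G2) b0 b1 a0 a1
      (ne (Sum.inr 0) (Sum.inr 1) (by decide)) (ne (Sum.inr 0) (Sum.inl 0) (by decide))
      (ne (Sum.inr 0) (Sum.inl 1) (by decide)) (ne (Sum.inr 1) (Sum.inl 0) (by decide))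
      (ne (Sum.inr 1) (Sum.inl 1) (by decide)) (ne (Sum.inl 0) (Sum.inl 1) (by decide))
      (hle _ _ (adj 0 0).symm) (hle _ _ (adj 1 0).symm) (hle _ _ (adj 0 1).symm)
      (hle _ _ (adj 1 1).symm) hnew
    obtain ⟨D2, hD2, hv2⟩ := exists_diamond_copy (G := G2) b0 b2 a0 a1
      (ne (Sum.inr 0) (Sum.inr 2) (by decide)) (ne (Sum.inr 0) (Sum.inl 0) (by decide))
      (ne (Sum.inr 0) (Sum.inl 1) (by decide)) (ne (Sum.inr 2) (Sum.inl 0) (by decide))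
      (ne (Sum.inr 2) (Sum.inl 1) (by decide)) (ne (Sum.inl 0) (Sum.inl 1) (by decide))
      (hle _ _ (adj 0 0).symm) (hle _ _ (adj 1 0).symm) (hle _ _ (adj 0 2).symm)
      (hle _ _ (adj 1 2).symm) hnew
    refine not_two_copies hsat (ne (Sum.inl 0) (Sum.inl 1) (by decide)) hnadj hD1 hD2 ?_
    intro h
    have hmem : b1 ∈ D2.verts := by
      rw [← h, hv1]; right; left; rfl
    rw [hv2] at hmem
    rcases hmem with h' | h' | h' | h'
    · exact ne (Sum.inr 1) (Sum.inr 0) (by decide) h'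
    · exact ne (Sum.inr 1) (Sum.inr 2) (by decide) h'
    · exact ne (Sum.inr 1) (Sum.inl 0) (by decide) h'
    · exact ne (Sum.inr 1) (Sum.inl 1) (by decide) h'
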